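/- Let n be a positive integer not divisible by 3. The map sending a (3,n)-Dyck path Π to the pair (k,ℓ), where k is the number of cells of λ(Π) in the first column of the lattice and ℓ the number of cells of λ(Π) in the second column, is a bijection from the set of (3,n)-Dyck paths onto the set of pairs of non-negative integers (k,ℓ) with ℓ ≤ ⌊n/3⌋ and ℓ ≤ k ≤ ⌊2n/3⌋. -/

import Mathlib

open MvPolynomial

/-- An `(m,n)`-Dyck path: a north/east lattice path from `(0,0)` to `(m,n)` staying
weakly above the diagonal `y = (n/m)x`.  Such a path is encoded by recording, for each
of the `m` columns (indexed `0,…,m-1` from left to right), the number of cells of that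
column lying above the path; this gives an antitone sequence, and the diagonal
condition for the east step in column `i` reads `m * c i ≤ n * (m - 1 - i)`. -/
def DyckPath (m n : ℕ) : Type :=
  {c : Fin m → Fin (n + 1) //
    (∀ i j : Fin m, i ≤ j → (c j : ℕ) ≤ (c i : ℕ)) ∧
      ∀ i : Fin m, m * (c i : ℕ) ≤ n * (m - 1 - (i : ℕ))}

noncomputable instance instFintypeDyckPath (m n : ℕ) : Fintype (DyckPath m n) := by
  classical
  unfold DyckPath
  infer_instance

namespace DyckPath

variable {m n : ℕ}

/-- `λ(Π)`, the set of cells of the `m × n` lattice lying above the path `Π`.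
The cell `(i, j)` (with `i : Fin m`, `j : Fin n`) is the cell in column `i + 1`
(from the left) and row `j + 1` (from the bottom) in the paper's 1-based indexing. -/
def cellsAbove (P : DyckPath m n) : Set (Fin m × Fin n) :=
  {x | n - (P.1 x.1 : ℕ) ≤ (x.2 : ℕ)}

/-- `arm(x)`: the number of cells of `λ(Π)` strictly east of `x` (in the row of `x`). -/
noncomputable def arm (P : DyckPath m n) (x : Fin m × Fin n) : ℕ :=
  {y ∈ P.cellsAbove | x.1 < y.1 ∧ y.2 = x.2}.ncard

/-- `leg(x)`: the number of cells of `λ(Π)` strictly south of `x` (in the column of `x`). -/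
noncomputable def leg (P : DyckPath m n) (x : Fin m × Fin n) : ℕ :=
  {y ∈ P.cellsAbove | y.1 = x.1 ∧ y.2 < x.2}.ncard

end DyckPath

/-- The dinv condition `arm/(leg+1) < m/n < (arm+1)/leg` for a cell with given arm `a`
and leg `l`, the right inequality being interpreted as true when `l = 0`. -/
def dinvCond (m n a l : ℕ) : Prop :=
  (a : ℚ) / ((l : ℚ) + 1) < (m : ℚ) / (n : ℚ) ∧
    (l = 0 ∨ (m : ℚ) / (n : ℚ) < ((a : ℚ) + 1) / (l : ℚ))

namespace DyckPath

variable {m n : ℕ}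

/-- `dinv(Π)`: the number of cells `x ∈ λ(Π)` with
`arm(x)/(leg(x)+1) < m/n < (arm(x)+1)/leg(x)`. -/
noncomputable def dinv (P : DyckPath m n) : ℕ :=
  {x ∈ P.cellsAbove | dinvCond m n (P.arm x) (P.leg x)}.ncard

/-- `area(Π)`: the number of cells of the lattice lying entirely between the path and
the diagonal, i.e. cells lying entirely weakly above the diagonal `y = (n/m)x` and
below the path. -/
noncomputable def area (P : DyckPath m n) : ℕ :=
  {x : Fin m × Fin n | n * ((x.1 : ℕ) + 1) ≤ m * (x.2 : ℕ) ∧ x ∉ P.cellsAbove}.ncard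

end DyckPath

/-- The `(m,n)`-rational `q,t`-Catalan polynomial `C_{m,n}(q,t)`, with `q = X 0` and
`t = X 1`:  `C_{m,n}(q,t) = Σ_Π q^{dinv(Π)} t^{area(Π)}` over all `(m,n)`-Dyck paths. -/
noncomputable def ratCatalan (m n : ℕ) : MvPolynomial (Fin 2) ℤ :=
  ∑ P : DyckPath m n, X 0 ^ P.dinv * X 1 ^ P.area

/-- The rank of the cell `(i, j)` of the `3 × n` lattice: in the paper's 1-based
coordinates `(a, b) = (i+1, j+1)`, this is `R(a,b) = -a·n + 3(b-1)`. -/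
def cellRank (n : ℕ) (x : Fin 3 × Fin n) : ℤ :=
  3 * (x.2 : ℤ) - ((x.1 : ℤ) + 1) * (n : ℤ)

/-- The set of positive ranks of the `3 × n` lattice: these, in increasing order, are
the entries of the rank word. -/
def posRank (n : ℕ) : Set ℤ :=
  {r | 0 < r ∧ ∃ x : Fin 3 × Fin n, cellRank n x = r}

/-- The set of marked ranks of a `(3,n)`-Dyck path: the ranks of the cells above
the path. -/
def markedRank {n : ℕ} (P : DyckPath 3 n) : Set ℤ :=
  cellRank n '' P.cellsAbove

/-- `skips(Π)`: the number of skips of `Π`, i.e. of maximal blocks of consecutive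
unmarked entries of the rank word of `Π` having at least one marked entry to the left
and at least one marked entry to the right.  Each such block is counted through its
rightmost entry `r`: `r` is an unmarked entry, some marked entry lies to its left, and
the next entry of the rank word after `r` is marked. -/
noncomputable def DyckPath.skips {n : ℕ} (P : DyckPath 3 n) : ℕ :=
  {r : ℤ | r ∈ posRank n ∧ r ∉ markedRank P ∧
    (∃ l ∈ markedRank P, l < r) ∧
    ∃ s ∈ markedRank P, r < s ∧ ∀ t ∈ posRank n, r < t → s ≤ t}.ncard

lemma fin_count_aux (n b : ℕ) : {j : Fin n | b ≤ (j : ℕ)}.ncard = n - b := by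
  classical
  have hinj : Function.Injective (fun k : Fin (n - b) => (⟨(k : ℕ) + b, by omega⟩ : Fin n)) := by
    intro x y h
    simp only [Fin.mk.injEq] at h
    exact Fin.ext (by omega)
  have hset : {j : Fin n | b ≤ (j : ℕ)} =
      Set.range (fun k : Fin (n - b) => (⟨(k : ℕ) + b, by omega⟩ : Fin n)) := by
    ext j
    simp only [Set.mem_setOf_eq, Set.mem_range, Fin.ext_iff]
    constructor
    · intro h
      exact ⟨⟨(j : ℕ) - b, by omega⟩, by show (j : ℕ) - b + b = (j : ℕ); omega⟩
    · rintro ⟨k, hk⟩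
      have := k.isLt
      omega
  rw [hset, ← Set.image_univ, Set.ncard_image_of_injective _ hinj, Set.ncard_univ]
  simp

lemma col_count (n : ℕ) (P : DyckPath 3 n) (i : Fin 3) :
    {x ∈ P.cellsAbove | x.1 = i}.ncard = (P.1 i : ℕ) := by
  classical
  have hle : (P.1 i : ℕ) ≤ n := by have := (P.1 i).isLt; omega
  have hset : {x ∈ P.cellsAbove | x.1 = i} =
      (fun j : Fin n => (i, j)) '' {j : Fin n | n - (P.1 i : ℕ) ≤ (j : ℕ)} := by
    ext ⟨a, b⟩
    simp only [DyckPath.cellsAbove, Set.mem_setOf_eq, Set.mem_image, Prod.mk.injEq]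
    constructor
    · rintro ⟨h1, rfl⟩
      exact ⟨b, h1, rfl, rfl⟩
    · rintro ⟨j, hj, rfl, rfl⟩
      exact ⟨hj, rfl⟩
  have hinj : Function.Injective (fun j : Fin n => (i, j)) := by
    intro x y h
    simpa using h
  rw [hset, Set.ncard_image_of_injective _ hinj, fin_count_aux]
  omega

/-- The map sending a `(3,n)`-Dyck path `Π` to the pair `(k, ℓ)` of
numbers of cells of `λ(Π)` in the first and second columns is a bijection onto the set
of pairs of non-negative integers `(k, ℓ)` with `ℓ ≤ ⌊n/3⌋` and `ℓ ≤ k ≤ ⌊2n/3⌋`. -/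
theorem bijOn_columnCounts (n : ℕ) (hn : 0 < n) (h3 : ¬ (3 ∣ n)) :
    Set.BijOn
      (fun P : DyckPath 3 n =>
        ({x ∈ P.cellsAbove | x.1 = 0}.ncard, {x ∈ P.cellsAbove | x.1 = 1}.ncard))
      Set.univ
      {p : ℕ × ℕ | p.2 ≤ n / 3 ∧ p.2 ≤ p.1 ∧ p.1 ≤ 2 * n / 3} := by
  classical
  refine ⟨?_, ?_, ?_⟩
  · -- MapsTo
    intro P _
    obtain ⟨c, hmono, hdiag⟩ := P
    simp only [col_count n ⟨c, hmono, hdiag⟩, Set.mem_setOf_eq]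
    have h0 := hdiag 0
    have h1 := hdiag 1
    have hm := hmono 0 1 (by decide)
    simp only [Fin.val_zero, Fin.val_one] at h0 h1 hm ⊢
    norm_num at h0 h1
    refine ⟨?_, hm, ?_⟩
    · rw [Nat.le_div_iff_mul_le (by norm_num)]; omega
    · rw [Nat.le_div_iff_mul_le (by norm_num)]; omega
  · -- InjOn
    intro P _ Q _ h
    simp only [col_count, Prod.mk.injEq] at h
    apply Subtype.ext
    funext i
    have hP2 : (P.1 2 : ℕ) = 0 := by have := P.2.2 2; simpa using this
    have hQ2 : (Q.1 2 : ℕ) = 0 := by have := Q.2.2 2; simpa using this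
    fin_cases i
    · show P.1 0 = Q.1 0; exact Fin.ext h.1
    · show P.1 1 = Q.1 1; exact Fin.ext h.2
    · show P.1 2 = Q.1 2; exact Fin.ext (by omega)
  · -- SurjOn
    rintro ⟨k, l⟩ ⟨hl3, hlk, hk3⟩
    simp only [Set.mem_setOf_eq] at hl3 hlk hk3
    have hk2 : 3 * k ≤ 2 * n := by
      have := Nat.div_mul_le_self (2 * n) 3
      omega
    have hl1 : 3 * l ≤ n := by
      have := Nat.div_mul_le_self n 3
      omega
    have hkn : k < n + 1 := by omega
    have hln : l < n + 1 := by omega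
    refine ⟨⟨![⟨k, hkn⟩, ⟨l, hln⟩, ⟨0, by omega⟩], ?_, ?_⟩, Set.mem_univ _, ?_⟩
    · intro i j hij
      fin_cases i <;> fin_cases j <;> simp_all [Fin.le_def]
    · intro i
      fin_cases i <;> simp <;> omega
    · simp only [col_count]
      exact Prod.ext (col_count n _ 0) (col_count n _ 1)
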